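/- Let (V,g) be a finite-dimensional real vector space with symmetric bilinear form g of rank k, and let (e_a) be an orthogonal basis with g(e_a,e_a) = 0 for a ≤ dim V − k and g(e_a,e_a) ≠ 0 otherwise. Then for any ω, τ ∈ V°, g•(ω,τ) = Σ_{a : g(e_a,e_a) ≠ 0} ω(e_a) τ(e_a) / g(e_a,e_a). -/

import Mathlib

/-- If (e_a) is an orthogonal basis with g(e_a,e_a) = 0 exactly for
a < dim V − rank g, then for all radical-annihilator 1-forms ω, τ,
g•(ω,τ) = Σ_{a : g(e_a,e_a) ≠ 0} ω(e_a) τ(e_a) / g(e_a,e_a). -/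
theorem stmt7 {V : Type*} [AddCommGroup V] [Module ℝ V] [FiniteDimensional ℝ V]
    (g : V →ₗ[ℝ] V →ₗ[ℝ] ℝ) (hsymm : ∀ u v, g u v = g v u)
    (n k : ℕ) (hn : n = Module.finrank ℝ V) (hk : k = LinearMap.rank g)
    (e : Module.Basis (Fin n) ℝ V)
    (horth : ∀ i j, i ≠ j → g (e i) (e j) = 0)
    (hzero : ∀ a : Fin n, g (e a) (e a) = 0 ↔ (a : ℕ) < n - k)
    (G : Module.Dual ℝ V → Module.Dual ℝ V → ℝ)
    (hG : ∀ u v : V, G (g u) (g v) = g u v)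
    (ω τ : Module.Dual ℝ V) (hω : ω ∈ LinearMap.range g) (hτ : τ ∈ LinearMap.range g) :
    G ω τ = ∑ a ∈ Finset.univ.filter (fun a : Fin n => g (e a) (e a) ≠ 0),
      ω (e a) * τ (e a) / g (e a) (e a) := by
  obtain ⟨u, rfl⟩ := hω
  obtain ⟨v, rfl⟩ := hτ
  have key : ∀ (w : V) (a : Fin n), g w (e a) = e.repr w a * g (e a) (e a) := by
    intro w a
    conv_lhs => rw [← e.sum_repr w]
    rw [map_sum, LinearMap.sum_apply]
    rw [Finset.sum_eq_single a]
    · simp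
    · intro b _ hb
      simp [horth b a hb]
    · simp
  rw [hG]
  have expand : g u v = ∑ a, e.repr v a * (e.repr u a * g (e a) (e a)) := by
    conv_lhs => rw [← e.sum_repr v]
    rw [map_sum]
    refine Finset.sum_congr rfl fun a _ => ?_
    rw [map_smul, smul_eq_mul, key u a]
  rw [expand]
  have hterm : ∀ a ∈ Finset.univ.filter (fun a : Fin n => g (e a) (e a) ≠ 0),
      (g u) (e a) * (g v) (e a) / g (e a) (e a)
        = e.repr v a * (e.repr u a * g (e a) (e a)) := by
    intro a ha
    simp only [Finset.mem_filter] at ha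
    rw [key u a, key v a, div_eq_iff ha.2]
    ring
  rw [Finset.sum_congr rfl hterm]
  refine (Finset.sum_subset (Finset.filter_subset _ _) ?_).symm
  intro a _ ha
  simp only [Finset.mem_filter, Finset.mem_univ, true_and, not_not] at ha
  rw [ha]; ring
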